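/- arXiv:1601.07259 — 2 statements merged into one kernel-verified Lean document; each statement's English description precedes it below -/
import Mathlib

section
/- There exists L such that for every integer l₁ ≥ L the following holds: for every β < 1/2, lim_{j→∞} (log N_j)/(l_j)^β = ∞. -/
open Filter MeasureTheory Topology

namespace EntDim

/-- The left shift `σ` on `A^ℤ`: `(shift x) i = x (i + 1)`. -/
def shift {A : Type*} (x : ℤ → A) : ℤ → A := fun i => x (i + 1)

/-- The shift by an integer `k`: `(shiftZ k x) i = x (i + k)`, i.e. `σ^k`. -/
def shiftZ {A : Type*} (k : ℤ) (x : ℤ → A) : ℤ → A := fun i => x (i + k)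

/-- A subshift: a nonempty closed shift-invariant subset of `A^ℤ`. -/
def IsSubshift {A : Type*} [TopologicalSpace A] (X : Set (ℤ → A)) : Prop :=
  X.Nonempty ∧ IsClosed X ∧ shift '' X = X

/-- `B_n(X)`: the set of words of length `n` occurring in `X`. -/
def wordsOf {A : Type*} (X : Set (ℤ → A)) (n : ℕ) : Set (Fin n → A) :=
  { w | ∃ x ∈ X, ∀ i : Fin n, w i = x ((i : ℕ) : ℤ) }

/-- `X` is minimal: every orbit is dense in `X`. -/
def IsMinimal {A : Type*} [TopologicalSpace A] (X : Set (ℤ → A)) : Prop :=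
  ∀ x ∈ X, X ⊆ closure { z | ∃ k : ℤ, z = shiftZ k x }

/-- `μ` is a shift-invariant Borel probability measure carried by `X`. -/
def IsInvProbOn {A : Type*} [MeasurableSpace A] (μ : Measure (ℤ → A))
    (X : Set (ℤ → A)) : Prop :=
  IsProbabilityMeasure μ ∧ MeasurePreserving shift μ μ ∧ μ X = 1

/-- The cylinder `[u] = {x ∈ X : x_i = u_i for 0 ≤ i < |u|}` of a finite word `u`. -/
def cylW {A : Type*} (X : Set (ℤ → A)) (u : List A) : Set (ℤ → A) :=
  { x | x ∈ X ∧ ∀ i : Fin u.length, x ((i : ℕ) : ℤ) = u.get i }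

/-- The `n`-cylinder `P_n(x) = {y ∈ X : y_i = x_i for 0 ≤ i < n}` of a point `x`. -/
def cylPt {A : Type*} (X : Set (ℤ → A)) (x : ℤ → A) (n : ℕ) : Set (ℤ → A) :=
  { y | y ∈ X ∧ ∀ i : ℕ, i < n → y (i : ℤ) = x (i : ℤ) }

/-- The first return time `R_n(x) = inf {k ≥ 1 : x_{k+i} = x_i for 0 ≤ i < n}`
(with the junk value `0` if no such `k` exists). -/
noncomputable def retTime {A : Type*} (x : ℤ → A) (n : ℕ) : ℕ :=
  sInf { k : ℕ | 1 ≤ k ∧ ∀ i : ℕ, i < n → x ((k : ℤ) + (i : ℕ)) = x ((i : ℕ) : ℤ) }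

/-- The sequence of pairs `(l_j, N_j)`, `j ≥ 1`, with `l_1 = l1`, `N_1 = 2^⌊√l1⌋`,
`l_{j+1} = l_j · N_j` and `N_{j+1} = (⌊√N_j⌋)!`.  (The value at `j = 0` is junk.) -/
def lN (l1 : ℕ) : ℕ → ℕ × ℕ
  | 0 => (0, 0)
  | 1 => (l1, 2 ^ Nat.sqrt l1)
  | j + 2 => ((lN l1 (j + 1)).1 * (lN l1 (j + 1)).2, Nat.factorial (Nat.sqrt (lN l1 (j + 1)).2))

/-- The length `l_j` of the words of `C_j`. -/
def lseq (l1 j : ℕ) : ℕ := (lN l1 j).1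

/-- The cardinality `N_j` of `C_j`. -/
def Nseq (l1 j : ℕ) : ℕ := (lN l1 j).2

/-- `i ∈ P_j = {2} ∪ {m² : 2 ≤ m ≤ ⌊√N⌋}` (1-based position `i`, where `N = N_j`):
the permuted (unstable) positions. -/
def PermutedIdx (N i : ℕ) : Prop :=
  i = 2 ∨ ∃ m : ℕ, 2 ≤ m ∧ m ≤ Nat.sqrt N ∧ i = m ^ 2

/-- The data of the Construction: a positive integer `l1` and ordered lists
`C j` (`j ≥ 1`) of distinct binary words (`C 0` is irrelevant), where `C 1` consists of
`N_1 = 2^⌊√l1⌋` words of length `l1`, `C j` consists of `N_j` words of length `l_j`, and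
`C (j+1)` is the set of all concatenations of the words of `C j` reordered by a
permutation preserving `P_j` and fixing every position outside `P_j`. -/
structure Construction where
  l1 : ℕ
  hl1 : 0 < l1
  C : ℕ → List (List Bool)
  nodup : ∀ j, 1 ≤ j → (C j).Nodup
  length_eq : ∀ j, 1 ≤ j → (C j).length = Nseq l1 j
  wordLength : ∀ j, 1 ≤ j → ∀ w ∈ C j, w.length = lseq l1 j
  mem_succ : ∀ j, 1 ≤ j → ∀ w : List Bool,
    w ∈ C (j + 1) ↔
      ∃ τ : Equiv.Perm (Fin (C j).length),
        (∀ i : Fin (C j).length, ¬ PermutedIdx (Nseq l1 j) ((i : ℕ) + 1) → τ i = i) ∧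
        (∀ i : Fin (C j).length, PermutedIdx (Nseq l1 j) ((i : ℕ) + 1) →
            PermutedIdx (Nseq l1 j) ((τ i : ℕ) + 1)) ∧
        w = (List.ofFn fun i : Fin (C j).length => (C j).get (τ i)).flatten

/-- The subshift `X` of the Construction: all `x ∈ {0,1}^ℤ` each of whose finite
subwords occurs as a subword of some word in some `C j`. -/
def Construction.space (c : Construction) : Set (ℤ → Bool) :=
  { x | ∀ (a : ℤ) (n : ℕ), ∃ j, 1 ≤ j ∧ ∃ w ∈ c.C j,
      (List.ofFn fun i : Fin n => x (a + (i : ℕ))) <:+: w }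

/-- The offset `t_j(x) ∈ {0, …, l_j − 1}` of the decomposition of `x` into `C j`-words
(defined as an infimum; it is unique in the Marker variant). -/
noncomputable def Construction.tOffset (c : Construction) (j : ℕ) (x : ℤ → Bool) : ℕ :=
  sInf { t : ℕ | t < lseq c.l1 j ∧ ∀ m : ℤ,
    (List.ofFn fun i : Fin (lseq c.l1 j) =>
      x (m * (lseq c.l1 j : ℤ) - (t : ℤ) + (i : ℕ))) ∈ c.C j }

/-- The Marker variant: every word of `C 1` begins with `001`, and `00` occurs in each
word of `C 1` only as its prefix. -/
structure MarkerConstruction extends Construction where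
  marker_prefix : ∀ w ∈ C 1, [false, false, true] <+: w
  marker_unique : ∀ w ∈ C 1, ∀ n : ℕ, [false, false] <+: w.drop n → n = 0


/-! ### Auxiliary lemmas for Statement 5 -/

lemma aux_fact_ge (m : ℕ) (hm : 5 ≤ m) : 2 * (m + 1) ^ 2 ≤ m.factorial := by
  induction m, hm using Nat.le_induction with
  | base => decide
  | succ m hm ih =>
    rw [Nat.factorial_succ]
    calc 2 * (m + 1 + 1) ^ 2 ≤ (m + 1) * (2 * (m + 1) ^ 2) := by nlinarith
      _ ≤ (m + 1) * m.factorial := Nat.mul_le_mul_left _ ih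

lemma aux_two_pow_le_fact (m : ℕ) : 2 ^ (m - 1) ≤ m.factorial := by
  induction m with
  | zero => decide
  | succ m ih =>
    rcases Nat.eq_zero_or_pos m with h | h
    · subst h; decide
    · rw [Nat.factorial_succ, Nat.succ_sub_one]
      calc 2 ^ m = 2 * 2 ^ (m - 1) := by
            rw [← pow_succ']; congr 1; omega
        _ ≤ (m + 1) * m.factorial := Nat.mul_le_mul (by omega) ih

lemma Nseq_succ_eq (l1 j : ℕ) (hj : 1 ≤ j) :
    Nseq l1 (j + 1) = (Nat.sqrt (Nseq l1 j)).factorial := by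
  obtain ⟨k, rfl⟩ : ∃ k, j = k + 1 := ⟨j - 1, by omega⟩
  rfl

lemma lseq_succ_eq (l1 j : ℕ) (hj : 1 ≤ j) :
    lseq l1 (j + 1) = lseq l1 j * Nseq l1 j := by
  obtain ⟨k, rfl⟩ : ∃ k, j = k + 1 := ⟨j - 1, by omega⟩
  rfl

lemma aux_base_bound {l1 : ℕ} (h : 64 ≤ l1) :
    ∀ j, 1 ≤ j → 64 ≤ Nseq l1 j ∧ 1 ≤ lseq l1 j := by
  intro j hj
  induction j, hj using Nat.le_induction with
  | base =>
    constructor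
    · show 64 ≤ 2 ^ Nat.sqrt l1
      have h8 : 8 ≤ Nat.sqrt l1 := Nat.le_sqrt.2 (by omega)
      calc (64 : ℕ) ≤ 2 ^ 8 := by norm_num
        _ ≤ 2 ^ Nat.sqrt l1 := Nat.pow_le_pow_right (by norm_num) h8
    · exact le_trans (by norm_num) h
  | succ j hj ih =>
    obtain ⟨hN, hl⟩ := ih
    rw [Nseq_succ_eq l1 j hj, lseq_succ_eq l1 j hj]
    constructor
    · have h8 : 8 ≤ Nat.sqrt (Nseq l1 j) := Nat.le_sqrt.2 (by omega)
      calc (64 : ℕ) ≤ Nat.factorial 8 := by decide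
        _ ≤ (Nat.sqrt (Nseq l1 j)).factorial := Nat.factorial_le h8
    · exact Nat.one_le_iff_ne_zero.2 (by positivity)

lemma aux_double {l1 : ℕ} (h : 64 ≤ l1) (j : ℕ) (hj : 1 ≤ j) :
    2 * Nseq l1 j ≤ Nseq l1 (j + 1) := by
  obtain ⟨hN, -⟩ := aux_base_bound h j hj
  rw [Nseq_succ_eq l1 j hj]
  set m := Nat.sqrt (Nseq l1 j) with hm
  have h8 : 8 ≤ m := Nat.le_sqrt.2 (by omega)
  have hlt : Nseq l1 j < (m + 1) * (m + 1) := Nat.lt_succ_sqrt _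
  calc 2 * Nseq l1 j ≤ 2 * (m + 1) ^ 2 := by nlinarith
    _ ≤ m.factorial := aux_fact_ge m (by omega)

lemma aux_grow {l1 : ℕ} (h : 64 ≤ l1) : ∀ j, 1 ≤ j → j + 63 ≤ Nseq l1 j := by
  intro j hj
  induction j, hj using Nat.le_induction with
  | base => simpa using (aux_base_bound h 1 le_rfl).1
  | succ j hj ih =>
    have h1 := aux_double h j hj
    have h2 := (aux_base_bound h j hj).1
    omega

lemma aux_tendsto_N {l1 : ℕ} (h : 64 ≤ l1) :
    Tendsto (fun j : ℕ => (Nseq l1 j : ℝ)) atTop atTop := by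
  refine tendsto_atTop_mono' atTop ?_ (tendsto_natCast_atTop_atTop (R := ℝ))
  · filter_upwards [eventually_ge_atTop 1] with j hj
    exact_mod_cast le_trans (by omega) (aux_grow h j hj)

/-- There is `L` such that for every `l₁ ≥ L` and every `β < 1/2`,
`lim_{j→∞} (log N_j)/(l_j)^β = ∞`. -/
theorem statement5 :
    ∃ L : ℕ, ∀ l1 : ℕ, L ≤ l1 → ∀ β : ℝ, β < 1 / 2 →
      Tendsto (fun j : ℕ => Real.log (Nseq l1 j) / (lseq l1 j : ℝ) ^ β) atTop atTop := by
  refine ⟨64, fun l1 h64 => ?_⟩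
  suffices H : ∀ β : ℝ, 0 < β → β < 1 / 2 →
      Tendsto (fun j : ℕ => Real.log (Nseq l1 j) / (lseq l1 j : ℝ) ^ β) atTop atTop by
    intro β hβ
    set β' : ℝ := max β (1/4) with hβ'
    have hββ' : β ≤ β' := le_max_left _ _
    have hβ'pos : 0 < β' := lt_of_lt_of_le (by norm_num) (le_max_right _ _)
    have hβ'lt : β' < 1/2 := max_lt hβ (by norm_num)
    refine tendsto_atTop_mono' atTop ?_ (H β' hβ'pos hβ'lt)
    filter_upwards [eventually_ge_atTop 1] with j hj
    obtain ⟨hN, hl⟩ := aux_base_bound h64 j hj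
    have hl1 : (1 : ℝ) ≤ (lseq l1 j : ℝ) := by exact_mod_cast hl
    have hlogN : 0 ≤ Real.log (Nseq l1 j) := by
      apply Real.log_nonneg; exact_mod_cast le_trans (by norm_num) hN
    exact div_le_div_of_nonneg_left hlogN (Real.rpow_pos_of_pos (by linarith) β)
      (Real.rpow_le_rpow_of_exponent_le hl1 hββ')
  intro β hβ0 hβ
  set ε : ℝ := (1/2 - β) / 2 with hεdef
  have hε : 0 < ε := by rw [hεdef]; linarith
  have hlog2 : 0 < Real.log 2 := Real.log_pos (by norm_num)
  have hNt := aux_tendsto_N h64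
  have hNε : Tendsto (fun j : ℕ => (Nseq l1 j : ℝ) ^ ε) atTop atTop :=
    (tendsto_rpow_atTop hε).comp hNt
  have hev : ∀ᶠ j : ℕ in atTop,
      4 / (ε * Real.log 2) ≤ (Nseq l1 j : ℝ) ^ ε ∧ (16 : ℝ) ≤ (Nseq l1 j : ℝ) ∧ 1 ≤ j := by
    filter_upwards [hNε.eventually_ge_atTop (4 / (ε * Real.log 2)),
      hNt.eventually_ge_atTop 16, eventually_ge_atTop 1] with j h1 h2 h3
    exact ⟨h1, h2, h3⟩
  obtain ⟨J, hJ⟩ := eventually_atTop.1 hev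
  set f : ℕ → ℝ := fun j => Real.log (Nseq l1 j) / (lseq l1 j : ℝ) ^ β with hfdef
  have hstep : ∀ j, J ≤ j → 2 * f j ≤ f (j + 1) := by
    intro j hj
    obtain ⟨hNεj, hN16, hj1⟩ := hJ j hj
    obtain ⟨hN64, hl1⟩ := aux_base_bound h64 j hj1
    set N : ℕ := Nseq l1 j
    set l : ℕ := lseq l1 j
    set m : ℕ := Nat.sqrt N with hmdef
    have hNpos : (0 : ℝ) < N := by linarith
    have hlpos : (0 : ℝ) < l := by exact_mod_cast hl1
    have hlβ : (0 : ℝ) < (l : ℝ) ^ β := Real.rpow_pos_of_pos hlpos β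
    have hNβ : (0 : ℝ) < (N : ℝ) ^ β := Real.rpow_pos_of_pos hNpos β
    -- sqrt bounds
    have hsqrt4 : (4 : ℝ) ≤ Real.sqrt N := by
      have : Real.sqrt 16 ≤ Real.sqrt N := Real.sqrt_le_sqrt hN16
      rwa [show (16 : ℝ) = 4 ^ 2 by norm_num, Real.sqrt_sq (by norm_num)] at this
    have hmlb : Real.sqrt N - 1 ≤ (m : ℝ) := by
      have hlt : (N : ℝ) < ((m : ℝ) + 1) ^ 2 := by
        have h2 : N < (m + 1) * (m + 1) := Nat.lt_succ_sqrt N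
        have h3 : (N : ℝ) < ((m : ℝ) + 1) * ((m : ℝ) + 1) := by exact_mod_cast h2
        nlinarith [h3]
      have := (Real.sqrt_lt' (by positivity : (0:ℝ) < (m : ℝ) + 1)).2 hlt
      linarith
    have hm3 : 3 ≤ m := by
      have : (3 : ℝ) ≤ (m : ℝ) := by linarith
      exact_mod_cast this
    -- key inequality : 2 * N^β * log N ≤ log (m !)
    have hkey : 2 * (N : ℝ) ^ β * Real.log N ≤ Real.log ((m.factorial : ℕ) : ℝ) := by
      have hlogfact : ((m : ℝ) - 1) * Real.log 2 ≤ Real.log (m.factorial : ℝ) := by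
        have hcast : ((2 : ℝ) ^ (m - 1) : ℝ) ≤ (m.factorial : ℝ) := by
          exact_mod_cast aux_two_pow_le_fact m
        have := Real.log_le_log (by positivity) hcast
        rw [Real.log_pow] at this
        have hm1 : ((m - 1 : ℕ) : ℝ) = (m : ℝ) - 1 := by
          push_cast [Nat.cast_sub (by omega : 1 ≤ m)]; ring
        rw [hm1] at this
        exact this
      have hlogN : Real.log N ≤ (N : ℝ) ^ ε / ε :=
        Real.log_le_rpow_div (le_of_lt hNpos) hε
      have hsplit : (N : ℝ) ^ ((1:ℝ)/2) = (N : ℝ) ^ (β + ε) * (N : ℝ) ^ ε := by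
        rw [← Real.rpow_add hNpos]
        congr 1
        rw [hεdef]; ring
      have hsqrt_rpow : Real.sqrt N = (N : ℝ) ^ ((1:ℝ)/2) := by
        rw [Real.sqrt_eq_rpow]
      have hNβε : (N : ℝ) ^ (β + ε) = (N : ℝ) ^ β * (N : ℝ) ^ ε :=
        Real.rpow_add hNpos β ε
      have hNεpos : (0 : ℝ) < (N : ℝ) ^ ε := Real.rpow_pos_of_pos hNpos ε
      have h1 : 2 * (N : ℝ) ^ β * Real.log N ≤ (2 / ε) * ((N : ℝ) ^ β * (N : ℝ) ^ ε) := by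
        have hlogN0 : 0 ≤ Real.log N := Real.log_nonneg (by linarith)
        calc 2 * (N : ℝ) ^ β * Real.log N ≤ 2 * (N : ℝ) ^ β * ((N : ℝ) ^ ε / ε) := by
              apply mul_le_mul_of_nonneg_left hlogN (by positivity)
          _ = (2 / ε) * ((N : ℝ) ^ β * (N : ℝ) ^ ε) := by field_simp
      have h2 : (2 / ε) ≤ Real.log 2 / 2 * (N : ℝ) ^ ε := by
        rw [div_le_iff₀ (by positivity : (0:ℝ) < ε * Real.log 2)] at hNεj
        rw [div_le_iff₀ hε]
        nlinarith [hNεj]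
      have h3 : Real.log 2 / 2 * (N : ℝ) ^ ε * ((N : ℝ) ^ β * (N : ℝ) ^ ε)
          = Real.sqrt N / 2 * Real.log 2 := by
        rw [hsqrt_rpow, hsplit, hNβε]; ring
      have h4 : Real.sqrt N / 2 * Real.log 2 ≤ ((m : ℝ) - 1) * Real.log 2 := by
        apply mul_le_mul_of_nonneg_right _ (le_of_lt hlog2)
        linarith
      calc 2 * (N : ℝ) ^ β * Real.log N
          ≤ (2 / ε) * ((N : ℝ) ^ β * (N : ℝ) ^ ε) := h1
        _ ≤ Real.log 2 / 2 * (N : ℝ) ^ ε * ((N : ℝ) ^ β * (N : ℝ) ^ ε) := by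
            apply mul_le_mul_of_nonneg_right h2 (by positivity)
        _ = Real.sqrt N / 2 * Real.log 2 := h3
        _ ≤ ((m : ℝ) - 1) * Real.log 2 := h4
        _ ≤ Real.log (m.factorial : ℝ) := hlogfact
    -- now rewrite f (j+1)
    have hfsucc : f (j + 1) = Real.log (m.factorial : ℝ) / ((l : ℝ) ^ β * (N : ℝ) ^ β) := by
      simp only [hfdef]
      rw [Nseq_succ_eq l1 j hj1, lseq_succ_eq l1 j hj1]
      congr 1
      push_cast
      rw [Real.mul_rpow (le_of_lt hlpos) (le_of_lt hNpos)]
    rw [hfsucc]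
    have : 2 * f j = 2 * (N : ℝ) ^ β * Real.log N / ((l : ℝ) ^ β * (N : ℝ) ^ β) := by
      simp only [hfdef]
      change 2 * (Real.log (N : ℝ) / (l : ℝ) ^ β) = _
      field_simp
    rw [this]
    exact (div_le_div_iff_of_pos_right (by positivity)).2 hkey
  -- positivity of f J
  obtain ⟨-, hN16J, hJ1⟩ := hJ J le_rfl
  obtain ⟨hN64J, hl1J⟩ := aux_base_bound h64 J hJ1
  have hfJ : 0 < f J := by
    apply div_pos
    · exact Real.log_pos (by linarith)
    · exact Real.rpow_pos_of_pos (by exact_mod_cast hl1J) β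
  have hgeom : ∀ k : ℕ, 2 ^ k * f J ≤ f (J + k) := by
    intro k
    induction k with
    | zero => simp
    | succ k ih =>
      have h1 := hstep (J + k) (Nat.le_add_right _ _)
      calc 2 ^ (k + 1) * f J = 2 * (2 ^ k * f J) := by ring
        _ ≤ 2 * f (J + k) := by linarith
        _ ≤ f (J + k + 1) := h1
        _ = f (J + (k + 1)) := by ring_nf
  have htend : Tendsto (fun k : ℕ => (2 : ℝ) ^ k * f J) atTop atTop :=
    (tendsto_pow_atTop_atTop_of_one_lt (by norm_num : (1:ℝ) < 2)).atTop_mul_const hfJ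
  have : Tendsto (fun k : ℕ => f (k + J)) atTop atTop := by
    apply tendsto_atTop_mono (fun k => ?_) htend
    rw [add_comm]
    exact hgeom k
  exact (tendsto_add_atTop_iff_nat J).1 this

end EntDim
end

section
/- In the Marker variant, let x ∈ X and j ≥ 1 and suppose the word x_0 x_1 ⋯ x_{l_j−1} belongs to C_j. Then every integer k ≥ 1 with x_{k+i} = x_i for all 0 ≤ i < l_j is a multiple of l_j; in particular the first return time of x to its l_j-cylinder is a multiple of l_j. -/
open Filter MeasureTheory Topology

namespace EntDim

/-! ### Auxiliary lemmas -/

private lemma flatten_length_eq {l : ℕ} :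
    ∀ (L : List (List Bool)), (∀ v ∈ L, v.length = l) → L.flatten.length = L.length * l
  | [], _ => by simp
  | v :: L, h => by
    have h1 := h v (List.mem_cons_self)
    have h2 := flatten_length_eq L (fun u hu => h u (List.mem_cons_of_mem _ hu))
    simp only [List.flatten_cons, List.length_append, List.length_cons, h1, h2]
    ring

private lemma flatten_drop_mul {l : ℕ} (a : ℕ) :
    ∀ (L : List (List Bool)), (∀ v ∈ L, v.length = l) →
      L.flatten.drop (a * l) = (L.drop a).flatten := by
  induction a with
  | zero => intro L _; simp
  | succ a ih =>
    intro L h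
    cases L with
    | nil => simp
    | cons v L' =>
      have hv : v.length = l := h v (List.mem_cons_self)
      have he : (a + 1) * l = l + a * l := by ring
      have hdl : List.drop l (v ++ L'.flatten) = L'.flatten := by
        rw [← hv]; exact List.drop_left
      rw [he, ← List.drop_drop, List.flatten_cons, hdl,
        ih L' (fun u hu => h u (List.mem_cons_of_mem _ hu)), List.drop_succ_cons]

private lemma block_prefix {l : ℕ} (L : List (List Bool)) (h : ∀ v ∈ L, v.length = l)
    (a : ℕ) (ha : a < L.length) : L[a] <+: L.flatten.drop (a * l) := by
  rw [flatten_drop_mul a L h, List.drop_eq_getElem_cons ha, List.flatten_cons]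
  exact List.prefix_append _ _

private lemma isPrefix_drop {u Y : List Bool} (h : u <+: Y) (m : ℕ) (hm : m ≤ u.length) :
    u.drop m <+: Y.drop m := by
  obtain ⟨t, rfl⟩ := h
  rw [List.drop_append_of_le_length hm]
  exact List.prefix_append _ _

lemma Nseq_pos (l1 : ℕ) : ∀ j, 1 ≤ j → 0 < Nseq l1 j
  | 1, _ => by
    show 0 < 2 ^ Nat.sqrt l1
    positivity
  | (m + 2), _ => Nat.factorial_pos _

lemma lseq_succ (l1 : ℕ) : ∀ j, 1 ≤ j → lseq l1 (j + 1) = lseq l1 j * Nseq l1 j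
  | 0, h => by omega
  | m + 1, _ => rfl

lemma lseq_pos (l1 : ℕ) (hl1 : 0 < l1) : ∀ j, 1 ≤ j → 0 < lseq l1 j
  | 1, _ => hl1
  | (m + 2), _ => by
    rw [lseq_succ l1 (m + 1) (by omega)]
    exact Nat.mul_pos (lseq_pos l1 hl1 (m + 1) (by omega)) (Nseq_pos l1 (m + 1) (by omega))

lemma lseq_mono (l1 : ℕ) (hl1 : 0 < l1) (j : ℕ) (hj : 1 ≤ j) :
    ∀ J, j ≤ J → lseq l1 j ≤ lseq l1 J := by
  refine Nat.le_induction le_rfl ?_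
  intro J hJ ih
  rw [lseq_succ l1 J (le_trans hj hJ)]
  calc lseq l1 j ≤ lseq l1 J := ih
    _ = lseq l1 J * 1 := (mul_one _).symm
    _ ≤ lseq l1 J * Nseq l1 J := Nat.mul_le_mul_left _ (Nseq_pos l1 J (le_trans hj hJ))

lemma not_permuted_one (N : ℕ) : ¬ PermutedIdx N 1 := by
  rintro (h | ⟨m, hm, -, h⟩)
  · omega
  · have : 4 ≤ m ^ 2 := by nlinarith
    omega

private lemma decomp_aux (c : Construction) (j : ℕ) :
    ∀ (M : List (List Bool)),
      (∀ b ∈ M, ∃ L : List (List Bool), (∀ v ∈ L, v ∈ c.C j) ∧ b = L.flatten) →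
      ∃ L : List (List Bool), (∀ v ∈ L, v ∈ c.C j) ∧ M.flatten = L.flatten
  | [], _ => ⟨[], by simp, by simp⟩
  | b :: M, h => by
    obtain ⟨Lb, hLb, hb⟩ := h b (List.mem_cons_self)
    obtain ⟨L, hL, hEq⟩ := decomp_aux c j M (fun b hb => h b (List.mem_cons_of_mem _ hb))
    exact ⟨Lb ++ L, fun v hv => (List.mem_append.1 hv).elim (hLb v) (hL v),
      by rw [List.flatten_cons, hEq, List.flatten_append, hb]⟩

lemma flatten_decomp (c : Construction) (j : ℕ) (hj : 1 ≤ j) :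
    ∀ J, j ≤ J → ∀ W ∈ c.C J, ∃ L : List (List Bool), (∀ v ∈ L, v ∈ c.C j) ∧ W = L.flatten := by
  refine Nat.le_induction ?_ ?_
  · intro W hW
    exact ⟨[W], by simpa using hW, by simp⟩
  · intro J hJ ih W hW
    rw [c.mem_succ J (le_trans hj hJ) W] at hW
    obtain ⟨τ, -, -, rfl⟩ := hW
    apply decomp_aux
    intro b hb
    rw [List.mem_ofFn] at hb
    obtain ⟨i, rfl⟩ := hb
    exact ih _ (List.get_mem _ _)

lemma block_prefix_of_mem_succ (c : Construction) {j : ℕ} (hj : 1 ≤ j)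
    {u : List Bool} (hu : u ∈ c.C (j + 1)) {r : ℕ} (hr : r < (c.C j).length) :
    ∃ s : ℕ, ∃ hs : s < (c.C j).length,
      (¬ PermutedIdx (Nseq c.l1 j) (r + 1) → s = r) ∧
      (PermutedIdx (Nseq c.l1 j) (r + 1) → PermutedIdx (Nseq c.l1 j) (s + 1)) ∧
      (c.C j).get ⟨s, hs⟩ <+: u.drop (r * lseq c.l1 j) := by
  obtain ⟨σ, hfix, hperm, rfl⟩ := (c.mem_succ j hj u).1 hu
  set B := List.ofFn fun i : Fin (c.C j).length => (c.C j).get (σ i) with hB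
  have hBlen : ∀ v ∈ B, v.length = lseq c.l1 j := by
    intro v hv
    rw [hB, List.mem_ofFn] at hv
    obtain ⟨i, rfl⟩ := hv
    exact c.wordLength j hj _ (List.get_mem _ _)
  have hrB : r < B.length := by simpa [hB] using hr
  have hpre : B[r] <+: B.flatten.drop (r * lseq c.l1 j) := block_prefix B hBlen r hrB
  have hBr : B[r] = (c.C j).get (σ ⟨r, hr⟩) := by simp [hB]
  refine ⟨(σ ⟨r, hr⟩ : ℕ), (σ ⟨r, hr⟩).2, ?_, ?_, ?_⟩
  · intro hP
    have := hfix ⟨r, hr⟩ (by simpa using hP)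
    simpa using congrArg Fin.val this
  · intro hP
    simpa using hperm ⟨r, hr⟩ (by simpa using hP)
  · rw [hBr] at hpre
    exact hpre

set_option maxHeartbeats 1000000 in
lemma occ_aligned (c : MarkerConstruction) :
    ∀ j, 1 ≤ j → ∀ J, 1 ≤ J → ∀ W ∈ c.C J, ∀ u ∈ c.C j, ∀ p : ℕ,
      u <+: W.drop p → lseq c.l1 j ∣ p := by
  intro j hj
  induction j, hj using Nat.le_induction with
  | base =>
    intro J hJ W hW u hu p hp
    have hfft : [false, false, true] <+: u := c.marker_prefix u hu
    have hl1e : lseq c.l1 1 = c.l1 := rfl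
    have hul : u.length = c.l1 := c.wordLength 1 le_rfl u hu
    have h3 : 3 ≤ c.l1 := by
      have := hfft.length_le
      simp [hul] at this
      omega
    obtain ⟨L, hL, rfl⟩ := flatten_decomp c.toConstruction 1 le_rfl J hJ W hW
    have hfftW : [false, false, true] <+: L.flatten.drop p := hfft.trans hp
    have hLl : ∀ v ∈ L, v.length = c.l1 := fun v hv => c.wordLength 1 le_rfl v (hL v hv)
    have hWlen : L.flatten.length = L.length * c.l1 := flatten_length_eq L hLl
    have hp3 : p + 3 ≤ L.flatten.length := by
      have h4 := hfftW.length_le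
      rw [List.length_drop] at h4
      have h5 : ([false, false, true] : List Bool).length = 3 := rfl
      omega
    set a := p / c.l1 with hadef
    set r := p % c.l1 with hrdef
    have hl1pos : 0 < c.l1 := by omega
    have hpar : p = a * c.l1 + r := (Nat.div_add_mod' p c.l1).symm
    have hr : r < c.l1 := Nat.mod_lt _ hl1pos
    have ha : a < L.length := by
      rw [hadef]
      rw [Nat.div_lt_iff_lt_mul hl1pos]
      omega
    have hLa : L[a].length = c.l1 := hLl _ (List.getElem_mem ha)
    have hv : L[a] <+: L.flatten.drop (a * c.l1) := block_prefix L hLl a ha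
    obtain ⟨t, ht⟩ := hv
    have hdp : L.flatten.drop p = L[a].drop r ++ t := by
      rw [hpar, ← List.drop_drop, ← ht, List.drop_append_of_le_length (by omega)]
    rw [hdp] at hfftW
    by_cases hcase : r + 2 ≤ c.l1
    · have hlen2 : 2 ≤ (L[a].drop r).length := by
        simp [List.length_drop, hLa]; omega
      have e0 := hfftW.getElem (i := 0) (by simp)
      rw [List.getElem_append_left (by omega)] at e0
      have e1 := hfftW.getElem (i := 1) (by simp)
      rw [List.getElem_append_left (by omega)] at e1
      have h00 : [false, false] <+: L[a].drop r := by
        rw [List.prefix_iff_eq_take]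
        refine List.ext_getElem (by simp [List.length_take]; omega) ?_
        intro n h1 h2
        have hn : n < 2 := by simpa using h1
        interval_cases n
        · simp only [List.getElem_take]
          simpa using e0
        · simp only [List.getElem_take]
          simpa using e1
      have hr0 : r = 0 := c.marker_unique L[a] (hL _ (List.getElem_mem ha)) r h00
      rw [hr0, add_zero] at hpar
      exact Dvd.intro_left a (by rw [hl1e]; exact hpar.symm)
    · have hrl : r = c.l1 - 1 := by omega
      have h2len : (L[a].drop r).length = 1 := by
        simp [List.length_drop, hLa]; omega
      have ht' : t = (L.drop (a + 1)).flatten := by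
        have h2 := ht
        rw [flatten_drop_mul a L hLl, List.drop_eq_getElem_cons ha, List.flatten_cons] at h2
        exact List.append_cancel_left h2
      have ht2 : 2 ≤ t.length := by
        have h4 : (L.flatten.drop p).length = L.flatten.length - p := List.length_drop
        rw [hdp, List.length_append, h2len] at h4
        omega
      have ha1 : a + 1 < L.length := by
        by_contra hcon
        have : L.drop (a + 1) = [] := List.drop_eq_nil_of_le (by omega)
        rw [this] at ht'
        simp [ht'] at ht2
      have hv'mem : L[a + 1] ∈ c.C 1 := hL _ (List.getElem_mem ha1)
      have hfft' : [false, false, true] <+: L[a + 1] := c.marker_prefix _ hv'mem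
      have hv'pref : L[a + 1] <+: t := by
        rw [ht', List.drop_eq_getElem_cons ha1, List.flatten_cons]
        exact List.prefix_append _ _
      have hv'len : L[a + 1].length = c.l1 := hLl _ (List.getElem_mem ha1)
      have e2 := hfftW.getElem (i := 2) (by simp)
      rw [List.getElem_append_right (by omega)] at e2
      have e2' : t[1]'(by omega) = true := by
        have hidx : 2 - (L[a].length - r) = 1 := by rw [hLa]; omega
        simpa [hidx] using e2.symm
      have e1 := hv'pref.getElem (i := 1) (by omega)
      have efalse : L[a + 1][1]'(by omega) = false := by
        have := (hfft'.getElem (i := 1) (by simp)).symm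
        simpa using this
      rw [efalse] at e1
      rw [e2'] at e1
      exact absurd e1 (by simp)
  | succ j hj ih =>
    intro J hJ W hW u hu p hp
    have hNpos : 0 < Nseq c.l1 j := Nseq_pos c.l1 j hj
    have hlpos : 0 < lseq c.l1 j := lseq_pos c.l1 c.hl1 j hj
    have hls : lseq c.l1 (j + 1) = lseq c.l1 j * Nseq c.l1 j := lseq_succ c.l1 j hj
    have hClen : (c.C j).length = Nseq c.l1 j := c.length_eq j hj
    set l := lseq c.l1 j with hldef
    set N := Nseq c.l1 j with hNdef
    -- first block of u is the first word of C j
    obtain ⟨s0, hs0, hfix0, -, hpref0⟩ :=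
      block_prefix_of_mem_succ c.toConstruction hj hu (r := 0) (by omega)
    have hs00 : s0 = 0 := hfix0 (by simpa using not_permuted_one N)
    subst hs00
    simp only [Nat.zero_mul, List.drop_zero] at hpref0
    have hu1W : (c.C j).get ⟨0, hs0⟩ <+: W.drop p := hpref0.trans hp
    have hdvd_l : l ∣ p := ih J hJ W hW _ (List.get_mem _ _) p hu1W
    by_cases hN1 : N = 1
    · rw [hls, hN1, mul_one]
      exact hdvd_l
    · have hN2 : 2 ≤ N := by omega
      have hulen : u.length = l * N := by
        rw [c.wordLength (j + 1) (by omega) u hu, hls]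
      have huple := hp.length_le
      rw [hulen, List.length_drop] at huple
      have hWJ : W.length = lseq c.l1 J := c.wordLength J hJ W hW
      have hJj : j + 1 ≤ J := by
        by_contra hcon
        have hJle : J ≤ j := by omega
        have hmono : lseq c.l1 J ≤ l := lseq_mono c.l1 c.hl1 J hJ j hJle
        have hWle : W.length ≤ l := by omega
        have h6 : l * N ≤ l := by omega
        have h7 : 2 * l ≤ l * N := by
          calc 2 * l = l * 2 := mul_comm _ _
            _ ≤ l * N := Nat.mul_le_mul_left _ hN2
        omega
      obtain ⟨L, hL, rfl⟩ := flatten_decomp c.toConstruction (j + 1) (by omega) J hJj W hW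
      have hLl : ∀ v ∈ L, v.length = l * N := fun v hv => by
        rw [c.wordLength (j + 1) (by omega) v (hL v hv), hls]
      have hWlen : L.flatten.length = L.length * (l * N) := flatten_length_eq L hLl
      obtain ⟨q, hq⟩ := hdvd_l
      set a := q / N with hadef
      set r := q % N with hrdef
      have hqar : q = N * a + r := (Nat.div_add_mod q N).symm
      have hrN : r < N := Nat.mod_lt _ hNpos
      have hpar : p = a * (l * N) + r * l := by rw [hq, hqar]; ring
      have hlN : 0 < l * N := by positivity
      have hplen : p + l * N ≤ L.flatten.length := by
        have hgen : ∀ m : ℕ, 0 < m → m ≤ L.flatten.length - p → p + m ≤ L.flatten.length := by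
          intro m; omega
        exact hgen (l * N) hlN huple
      have ha : a < L.length := by
        have h2 : (a + 1) * (l * N) ≤ L.length * (l * N) := by
          have e : (a + 1) * (l * N) = a * (l * N) + l * N := by ring
          rw [e, ← hWlen]
          omega
        have := Nat.le_of_mul_le_mul_right h2 hlN
        omega
      have hva : L[a] <+: L.flatten.drop (a * (l * N)) := block_prefix L hLl a ha
      obtain ⟨s, hs, hfix, hperm, hpref⟩ :=
        block_prefix_of_mem_succ c.toConstruction hj (hL _ (List.getElem_mem ha))
          (r := r) (by omega)
      have hrlle : r * l ≤ L[a].length := by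
        rw [hLl _ (List.getElem_mem ha)]
        calc r * l ≤ N * l := Nat.mul_le_mul_right l (le_of_lt hrN)
          _ = l * N := mul_comm _ _
      have hvdrop : L[a].drop (r * l) <+: (L.flatten.drop (a * (l * N))).drop (r * l) :=
        isPrefix_drop hva _ hrlle
      have hdd : (L.flatten.drop (a * (l * N))).drop (r * l) = L.flatten.drop p := by
        rw [List.drop_drop, ← hpar]
      rw [hdd] at hvdrop
      have hvr : (c.C j).get ⟨s, hs⟩ <+: L.flatten.drop p := hpref.trans hvdrop
      have hlen1 : ((c.C j).get ⟨s, hs⟩).length = l := c.wordLength j hj _ (List.get_mem _ _)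
      have hlen0 : ((c.C j).get ⟨0, hs0⟩).length = l := c.wordLength j hj _ (List.get_mem _ _)
      have heq : (c.C j).get ⟨s, hs⟩ = (c.C j).get ⟨0, hs0⟩ := by
        rw [List.prefix_iff_eq_take] at hvr hu1W
        rw [hvr, hu1W, hlen1, hlen0]
      have hsz : s = 0 := by
        have hinj := List.nodup_iff_injective_get.1 (c.nodup j hj) heq
        simpa using congrArg Fin.val hinj
      have hr0 : r = 0 := by
        by_cases hPr : PermutedIdx N (r + 1)
        · exact absurd (hsz ▸ hperm hPr) (by simpa using not_permuted_one N)
        · have := hfix hPr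
          omega
      refine ⟨a, ?_⟩
      rw [hls, hpar, hr0]
      ring

/-- Marker variant: if `x ∈ X` and `x_0 ⋯ x_{l_j−1} ∈ C_j`, then every
return time of `x` to its `l_j`-cylinder is a multiple of `l_j`; in particular the first
return time `R_{l_j}(x)` is a multiple of `l_j`. -/
theorem statement8 (c : MarkerConstruction) (x : ℤ → Bool)
    (hx : x ∈ c.toConstruction.space) (j : ℕ) (hj : 1 ≤ j)
    (h0 : (List.ofFn fun i : Fin (lseq c.l1 j) => x ((i : ℕ) : ℤ)) ∈ c.C j) :
    (∀ k : ℕ, 1 ≤ k →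
      (∀ i : ℕ, i < lseq c.l1 j → x ((k : ℤ) + (i : ℕ)) = x ((i : ℕ) : ℤ)) →
      lseq c.l1 j ∣ k) ∧
    lseq c.l1 j ∣ retTime x (lseq c.l1 j) := by
  have hlpos : 0 < lseq c.l1 j := lseq_pos c.l1 c.hl1 j hj
  set l := lseq c.l1 j with hldef
  have main : ∀ k : ℕ, 1 ≤ k →
      (∀ i : ℕ, i < l → x ((k : ℤ) + (i : ℕ)) = x ((i : ℕ) : ℤ)) → l ∣ k := by
    intro k hk hret
    obtain ⟨J, hJ, W, hW, hinf⟩ := hx 0 (k + l)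
    obtain ⟨pre, post, hWeq⟩ := hinf
    set mid := List.ofFn fun i : Fin (k + l) => x ((0 : ℤ) + (i : ℕ)) with hmid
    have hmidpre : mid <+: W.drop pre.length := by
      rw [← hWeq, List.append_assoc, List.drop_left]
      exact List.prefix_append _ _
    set u := List.ofFn fun i : Fin l => x ((i : ℕ) : ℤ) with hu
    have hulen : u.length = l := by simp [hu]
    have hmidlen : mid.length = k + l := by simp [hmid]
    have hupre : u <+: mid := by
      rw [List.prefix_iff_eq_take]
      refine List.ext_getElem (by simp [List.length_take, hulen, hmidlen]) ?_
      intro n h1 h2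
      rw [hulen] at h1
      simp [hu, hmid, List.getElem_take, List.getElem_ofFn]
    have hupre2 : u <+: mid.drop k := by
      rw [List.prefix_iff_eq_take]
      refine List.ext_getElem (by simp [List.length_take, List.length_drop, hulen, hmidlen]) ?_
      intro n h1 h2
      rw [hulen] at h1
      have hgoal : x ((n : ℕ) : ℤ) = x ((0 : ℤ) + ((k + n : ℕ) : ℤ)) := by
        have h := hret n h1
        push_cast
        rw [zero_add]
        exact h.symm
      simpa [hu, hmid, List.getElem_take, List.getElem_drop, List.getElem_ofFn] using hgoal
    have h1 : l ∣ pre.length :=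
      occ_aligned c j hj J hJ W hW u h0 pre.length (hupre.trans hmidpre)
    have h2 : l ∣ pre.length + k := by
      have hdm : mid.drop k <+: (W.drop pre.length).drop k :=
        isPrefix_drop hmidpre k (by rw [hmidlen]; omega)
      rw [List.drop_drop] at hdm
      exact occ_aligned c j hj J hJ W hW u h0 _ (hupre2.trans hdm)
    exact (Nat.dvd_add_right h1).mp h2
  refine ⟨main, ?_⟩
  by_cases hS : {k : ℕ | 1 ≤ k ∧ ∀ i : ℕ, i < l →
      x ((k : ℤ) + (i : ℕ)) = x ((i : ℕ) : ℤ)}.Nonempty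
  · obtain ⟨hk1, hk2⟩ := Nat.sInf_mem hS
    exact main _ hk1 hk2
  · show l ∣ sInf {k : ℕ | 1 ≤ k ∧ ∀ i : ℕ, i < l →
      x ((k : ℤ) + (i : ℕ)) = x ((i : ℕ) : ℤ)}
    rw [Set.not_nonempty_iff_eq_empty.1 hS, Nat.sInf_empty]
    exact dvd_zero _


end EntDim
end
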